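/- In the Clifford algebra C₄ (the case n = 4), the elements a = (1 + e₂·e₃)/√2 and b = e₁·e₃ satisfy a⁴ = b² = (ab)² = −1 (and hence a⁸ = 1), and the subgroup of the group of units generated by a and b is isomorphic to the generalized quaternion group Q₁₆ of order 16 (Mathlib's QuaternionGroup 4). -/
import Mathlib


open CliffordAlgebra

/-- The quadratic form `Q(v) = -∑ i, v i ^ 2` on `ℝⁿ = (Fin n → ℝ)`. -/
noncomputable def Qneg (n : ℕ) : QuadraticForm ℝ (Fin n → ℝ) :=
  QuadraticMap.weightedSumSquares ℝ (fun _ : Fin n => (-1 : ℝ))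

/-- The Clifford algebra `Cₙ` of `Qneg n`. -/
noncomputable abbrev Cl (n : ℕ) := CliffordAlgebra (Qneg n)

/-- The generator `eᵢ = ι(εᵢ)`, the image of the `i`-th standard basis vector. -/
noncomputable def e {n : ℕ} (i : Fin n) : Cl n := ι (Qneg n) (Pi.single i 1)

/-- The Clifford conjugate `x̄ = reverse (involute x)`. -/
noncomputable def conj {n : ℕ} (x : Cl n) : Cl n := reverse (involute x)

/-- `x` lies in the spin group `Spin(n)`: it is a unit with `involute x = x` and `x * x̄ = 1`. -/
def InSpin {n : ℕ} (x : Cl n) : Prop :=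
  IsUnit x ∧ involute x = x ∧ x * conj x = 1

lemma Qneg_single {n : ℕ} (i : Fin n) : Qneg n (Pi.single i 1) = -1 := by
  simp [Qneg, QuadraticMap.weightedSumSquares_apply, Pi.single_apply,
    Finset.sum_ite_eq', mul_ite]

lemma e_sq {n : ℕ} (i : Fin n) : e i * e i = -1 := by
  rw [e, ι_sq_scalar, Qneg_single, map_neg, map_one]

lemma e_ortho {n : ℕ} {i j : Fin n} (h : i ≠ j) :
    (Qneg n).IsOrtho (Pi.single i 1) (Pi.single j 1) := by
  simp only [QuadraticMap.isOrtho_def, Qneg, QuadraticMap.weightedSumSquares_apply]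
  rw [← Finset.sum_add_distrib]
  refine Finset.sum_congr rfl fun k _ => ?_
  rcases eq_or_ne k i with rfl | hki
  · simp [Pi.single_apply, h.symm, (Ne.symm h)]
  · rcases eq_or_ne k j with rfl | hkj
    · simp [Pi.single_apply, hki]
    · simp [Pi.single_apply, hki, hkj]

lemma e_anticomm {n : ℕ} {i j : Fin n} (h : i ≠ j) : e i * e j = -(e j * e i) := by
  rw [e, e]
  exact ι_mul_ι_comm_of_isOrtho (e_ortho h)

lemma pair_mulA {n : ℕ} {i j k : Fin n} (hkj : k ≠ j) :
    (e i * e j) * (e k * e j) = e i * e k := by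
  have h1 : e j * e k = -(e k * e j) := e_anticomm (Ne.symm hkj)
  rw [mul_assoc, ← mul_assoc (e j), h1, neg_mul, mul_assoc, e_sq, mul_neg_one,
    neg_neg]

lemma pair_mulB {n : ℕ} {i j k : Fin n} (hji : j ≠ i) :
    (e i * e j) * (e i * e k) = e j * e k := by
  have h1 : e j * e i = -(e i * e j) := e_anticomm hji
  rw [mul_assoc, ← mul_assoc (e j), h1, neg_mul, mul_neg, ← mul_assoc, ← mul_assoc,
    e_sq, neg_one_mul, neg_mul, neg_neg]

/-- Auxiliary map used to define the homomorphism from the quaternion group. -/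
noncomputable def phiFun (ua ub : (Cl 4)ˣ) : QuaternionGroup 4 → (Cl 4)ˣ
  | .a i => ua ^ i.val
  | .xa i => ub * ua ^ i.val

@[simp] lemma phiFun_a (ua ub : (Cl 4)ˣ) (i : ZMod (2 * 4)) :
    phiFun ua ub (QuaternionGroup.a i) = ua ^ i.val := rfl

@[simp] lemma phiFun_xa (ua ub : (Cl 4)ˣ) (i : ZMod (2 * 4)) :
    phiFun ua ub (QuaternionGroup.xa i) = ub * ua ^ i.val := rfl

/-- In `C₄`, the elements `a = (1 + e₂e₃)/√2` and `b = e₁e₃` satisfy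
`a⁴ = b² = (ab)² = -1` (hence `a⁸ = 1`), and the subgroup of the group of units generated by
`a` and `b` is isomorphic to the generalized quaternion group `Q₁₆` (Mathlib's
`QuaternionGroup 4`). (Indices `1,2,3,4` correspond to `0,1,2,3 : Fin 4`.) -/
theorem stmt4 (a b : Cl 4) (ha : a = (Real.sqrt 2)⁻¹ • (1 + e 1 * e 2)) (hb : b = e 0 * e 2) :
    a ^ 4 = -1 ∧ b ^ 2 = -1 ∧ (a * b) ^ 2 = -1 ∧ a ^ 8 = 1 ∧
      ∃ ua ub : (Cl 4)ˣ, (ua : Cl 4) = a ∧ (ub : Cl 4) = b ∧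
        Nonempty ((Subgroup.closure {ua, ub} : Subgroup (Cl 4)ˣ) ≃* QuaternionGroup 4) := by
  set s : ℝ := (Real.sqrt 2)⁻¹ with hs_def
  set u : Cl 4 := e 1 * e 2 with hu_def
  set v : Cl 4 := e 0 * e 2 with hv_def
  set w : Cl 4 := e 0 * e 1 with hw_def
  have hss : s * s = 2⁻¹ := by
    rw [hs_def, ← mul_inv, Real.mul_self_sqrt (by norm_num)]
  have hsm : ∀ x y : Cl 4, (s • x) * (s • y) = (s * s) • (x * y) := fun x y => by
    rw [smul_mul_assoc, mul_smul_comm, smul_smul]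
  have huu : u * u = -1 := by rw [hu_def, pair_mulA (by decide), e_sq]
  have hvv : v * v = -1 := by rw [hv_def, pair_mulA (by decide), e_sq]
  have hww : w * w = -1 := by rw [hw_def, pair_mulB (by decide), e_sq]
  have huv : u * v = -w := by
    rw [hu_def, hv_def, pair_mulA (show (0 : Fin 4) ≠ 2 by decide),
      e_anticomm (show (1 : Fin 4) ≠ 0 by decide), hw_def]
  have hvu : v * u = w := by
    rw [hv_def, hu_def, pair_mulA (show (1 : Fin 4) ≠ 2 by decide), hw_def]
  have hvw : v * w = -u := by
    rw [hv_def, hw_def, pair_mulB (show (2 : Fin 4) ≠ 0 by decide),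
      e_anticomm (show (2 : Fin 4) ≠ 1 by decide), hu_def]
  have hwv : w * v = u := by
    rw [hw_def, hv_def, pair_mulB (show (1 : Fin 4) ≠ 0 by decide), hu_def]
  -- a² = u
  have haa : a * a = u := by
    have hexp : (1 + u) * (1 + u) = (2 : ℝ) • u := by
      rw [mul_add, mul_one, add_mul, one_mul, huu, two_smul]
      abel
    rw [ha, hsm, hexp, smul_smul, hss]
    norm_num
  have ha4 : a ^ 4 = -1 := by
    show a ^ (2 + 2) = -1
    rw [pow_add, pow_two, haa, huu]
  have hbb : b * b = -1 := by rw [hb]; exact hvv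
  have hb2 : b ^ 2 = -1 := by rw [pow_two, hbb]
  have ha8 : a ^ 8 = 1 := by
    show a ^ (4 + 4) = 1
    rw [pow_add, ha4, neg_mul_neg, one_mul]
  -- (ab)² = -1
  have habv : a * b = s • (v - w) := by
    rw [ha, hb, smul_mul_assoc, add_mul, one_mul, huv, ← sub_eq_add_neg]
  have hab2 : (a * b) ^ 2 = -1 := by
    have hx : (v - w) * (v - w) = (-2 : ℝ) • (1 : Cl 4) := by
      rw [sub_mul, mul_sub, mul_sub, hvv, hww, hvw, hwv]
      have h2 : ((-2 : ℝ) • (1 : Cl 4)) = -((1 : Cl 4) + 1) := by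
        rw [show (-2 : ℝ) = -(2 : ℝ) by norm_num, neg_smul, two_smul]
      rw [h2]
      abel
    rw [pow_two, habv, hsm, hx, smul_smul, hss]
    norm_num
  -- the units
  have haa' : a * (s • (1 - u)) = 1 := by
    have hexp : (1 + u) * (1 - u) = (2 : ℝ) • (1 : Cl 4) := by
      rw [mul_sub, mul_one, add_mul, one_mul, huu, two_smul]
      abel
    rw [ha, hsm, hexp, smul_smul, hss]
    norm_num
  have ha'a : (s • (1 - u)) * a = 1 := by
    have hexp : (1 - u) * (1 + u) = (2 : ℝ) • (1 : Cl 4) := by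
      rw [mul_add, mul_one, sub_mul, one_mul, huu, two_smul]
      abel
    rw [ha, hsm, hexp, smul_smul, hss]
    norm_num
  set ua : (Cl 4)ˣ := ⟨a, s • (1 - u), haa', ha'a⟩ with hua_def
  set ub : (Cl 4)ˣ := ⟨b, -b, by rw [mul_neg, hbb, neg_neg], by rw [neg_mul, hbb, neg_neg]⟩
    with hub_def
  -- relations at unit level
  have hUa8 : ua ^ 8 = 1 := Units.ext (by rw [Units.val_pow_eq_pow_val]; exact ha8)
  have hcomU : ua * ub = ub * ua⁻¹ := by
    apply Units.ext
    show a * b = b * (s • (1 - u))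
    rw [habv, hb, mul_smul_comm, mul_sub, mul_one, hvu]
  have hubub : ub * ub = ua ^ 4 := by
    apply Units.ext
    show b * b = (ua ^ 4 : (Cl 4)ˣ)
    rw [Units.val_pow_eq_pow_val, hbb]
    show (-1 : Cl 4) = a ^ 4
    rw [ha4]
  have hua7 : ua ^ 7 = ua⁻¹ :=
    eq_inv_of_mul_eq_one_left (by rw [← pow_succ]; exact hUa8)
  have hconj : ∀ m : ℕ, ua ^ m * ub = ub * ua ^ (7 * m) := by
    intro m
    induction m with
    | zero => simp
    | succ k ih =>
      rw [pow_succ, mul_assoc, hcomU, ← mul_assoc, ih, mul_assoc, ← hua7,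
        ← pow_add, Nat.mul_succ]
  have hmod : ∀ m : ℕ, ua ^ m = ua ^ (m % 8) := by
    intro m
    conv_lhs => rw [← Nat.div_add_mod m 8]
    rw [pow_add, pow_mul, hUa8, one_pow, one_mul]
  have key : ∀ m k : ℕ, m % 8 = k % 8 → ua ^ m = ua ^ k := by
    intro m k h
    rw [hmod m, hmod k, h]
  -- the homomorphism
  have hmul : ∀ g h : QuaternionGroup 4,
      phiFun ua ub (g * h) = phiFun ua ub g * phiFun ua ub h := by
    rintro (i | i) (j | j)
    · rw [QuaternionGroup.a_mul_a, phiFun_a, phiFun_a, phiFun_a, ← pow_add]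
      refine key _ _ ?_
      have h1 := ZMod.val_add i j
      have h2 := ZMod.val_lt i
      have h3 := ZMod.val_lt j
      omega
    · rw [QuaternionGroup.a_mul_xa, phiFun_a, phiFun_xa, phiFun_xa, ← mul_assoc,
        hconj, mul_assoc, ← pow_add]
      refine congrArg (ub * ·) (key _ _ ?_)
      have h1 := ZMod.val_add (j - i) i
      have h2 : j - i + i = j :=sub_add_cancel _ _
      rw [h2] at h1
      have h3 := ZMod.val_lt i
      have h4 := ZMod.val_lt j
      have h5 := ZMod.val_lt (j - i)
      omega
    · rw [QuaternionGroup.xa_mul_a, phiFun_xa, phiFun_xa, phiFun_a, mul_assoc,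
        ← pow_add]
      refine congrArg (ub * ·) (key _ _ ?_)
      have h1 := ZMod.val_add i j
      have h2 := ZMod.val_lt i
      have h3 := ZMod.val_lt j
      omega
    · rw [QuaternionGroup.xa_mul_xa, phiFun_xa, phiFun_xa, phiFun_a,
        mul_assoc, ← mul_assoc (ua ^ i.val), hconj, ← mul_assoc, ← mul_assoc,
        hubub, ← pow_add, ← pow_add]
      refine key _ _ ?_
      have h1 := ZMod.val_add (((4 : ℕ) : ZMod (2 * 4)) + j - i) i
      have h2 : ((4 : ℕ) : ZMod (2 * 4)) + j - i + i = ((4 : ℕ) : ZMod (2 * 4)) + j :=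
        sub_add_cancel _ _
      rw [h2] at h1
      have h3 := ZMod.val_add (((4 : ℕ) : ZMod (2 * 4))) j
      have h4 := ZMod.val_natCast (n := 2 * 4) 4
      have h5 := ZMod.val_lt i
      have h6 := ZMod.val_lt j
      have h7 := ZMod.val_lt (((4 : ℕ) : ZMod (2 * 4)) + j - i)
      omega
  set φ : QuaternionGroup 4 →* (Cl 4)ˣ := MonoidHom.mk' (phiFun ua ub) hmul with hφ_def
  have hφa : ∀ i : ZMod (2 * 4), φ (QuaternionGroup.a i) = ua ^ i.val := fun i => rfl
  have hφxa : ∀ i : ZMod (2 * 4), φ (QuaternionGroup.xa i) = ub * ua ^ i.val := fun i => rfl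
  -- injectivity
  have hdec : ∀ g : QuaternionGroup 4, g ≠ 1 →
      g = QuaternionGroup.a 4 ∨ g ^ 2 = QuaternionGroup.a 4 ∨ g ^ 4 = QuaternionGroup.a 4 := by
    decide
  have hm1 : (-1 : Cl 4) ≠ 1 := by
    intro h6
    have h7 : (algebraMap ℝ (Cl 4)) 2 = 0 := by
      rw [show (2 : ℝ) = 1 + 1 by norm_num, map_add, map_one]
      nth_rewrite 1 [← h6]
      rw [neg_add_cancel]
    haveI : Invertible (2 : ℝ) := invertibleOfNonzero two_ne_zero
    have h8 := congrArg (equivExterior (Qneg 4)) h7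
    rw [map_zero] at h8
    simp only [CliffordAlgebra.equivExterior, CliffordAlgebra.changeFormEquiv_apply,
      CliffordAlgebra.changeForm_algebraMap] at h8
    exact (by norm_num : (2 : ℝ) ≠ 0) (((ExteriorAlgebra.algebraMap_eq_zero_iff (M := Fin 4 → ℝ) 2).mp h8))
  have hker : ∀ g : QuaternionGroup 4, φ g = 1 → g = 1 := by
    intro g hg
    by_contra hne
    have h4 : φ (QuaternionGroup.a 4) = 1 := by
      rcases hdec g hne with h | h | h
      · rw [← h]; exact hg
      · rw [← h, map_pow, hg, one_pow]
      · rw [← h, map_pow, hg, one_pow]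
    rw [hφa, show ((4 : ZMod (2 * 4)).val) = 4 by decide] at h4
    have h5 : (a ^ 4 : Cl 4) = 1 := by
      have := congrArg Units.val h4
      rwa [Units.val_pow_eq_pow_val, Units.val_one] at this
    rw [ha4] at h5
    exact hm1 h5
  have hinj : Function.Injective φ := (injective_iff_map_eq_one φ).mpr hker
  -- generation
  have hA : ∀ i : ZMod (2 * 4), QuaternionGroup.a i ∈
      Subgroup.closure ({QuaternionGroup.a 1, QuaternionGroup.xa 0} :
        Set (QuaternionGroup 4)) := by
    intro i
    have h1 : QuaternionGroup.a i = (QuaternionGroup.a 1) ^ (i.val) := by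
      rw [QuaternionGroup.a_one_pow, ZMod.natCast_val, ZMod.cast_id]
    rw [h1]
    exact pow_mem (Subgroup.subset_closure (Set.mem_insert _ _)) _
  have hgen : Subgroup.closure ({QuaternionGroup.a 1, QuaternionGroup.xa 0} :
      Set (QuaternionGroup 4)) = ⊤ := by
    rw [eq_top_iff]
    rintro (i | i) -
    · exact hA i
    · have h1 : QuaternionGroup.xa i = QuaternionGroup.xa 0 * QuaternionGroup.a i := by
        rw [QuaternionGroup.xa_mul_a, zero_add]
      rw [h1]
      exact mul_mem
        (Subgroup.subset_closure (Set.mem_insert_of_mem _ rfl)) (hA i)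
  have hφ1 : φ (QuaternionGroup.a 1) = ua := by
    rw [hφa, show ((1 : ZMod (2 * 4)).val) = 1 by decide, pow_one]
  have hφ0 : φ (QuaternionGroup.xa 0) = ub := by
    rw [hφxa, show ((0 : ZMod (2 * 4)).val) = 0 by decide, pow_zero, mul_one]
  have hrange : φ.range = Subgroup.closure ({ua, ub} : Set (Cl 4)ˣ) := by
    rw [MonoidHom.range_eq_map, ← hgen, MonoidHom.map_closure]
    congr 1
    rw [Set.image_insert_eq, Set.image_singleton, hφ1, hφ0]
  exact ⟨ha4, hb2, hab2, ha8, ua, ub, rfl, rfl,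
    ⟨(MulEquiv.subgroupCongr hrange.symm).trans (MonoidHom.ofInjective hinj).symm⟩⟩
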